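/- Let D ≥ 2 be a natural number, B > 0, and let S₁, …, S_n ⊆ [−B, B]^D be pairwise disjoint D-simplices (each the convex hull of D + 1 affinely independent points of ℝ^D). Then for every δ > 0 there exist a natural number N, an affine function g₀ : ℝ^D → ℝ, and for each j ∈ {1, …, N} affine functions h_{1,j}, …, h_{D,j} : ℝ^D → ℝ, strictly positive reals μ_{1,j}, …, μ_{D−1,j}, and a real coefficient cⱼ, such that, with F^{(j)} the fan-shaped function built from (h_{1,j}, …, h_{D,j}) and (μ_{1,j}, …, μ_{D−1,j}), the Lebesgue measure of { x ∈ [−B, B]^D : g₀(x) + Σ_{j=1}^{N} cⱼ·F^{(j)}(x) ≠ 1_{⋃ᵢ Sᵢ}(x) } is less than δ. (This is the content of the generalized De Morgan duality: a disjoint rule system over simplices, i.e., the indicator of the union of the simplices, is represented by a ReLU expression up to arbitrarily small measure.) -/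

import Mathlib

open MeasureTheory

/-- A function `(Fin D → ℝ) → ℝ` is affine if it is of the form
`x ↦ ∑ d, w d * x d + r`. -/
def IsAffineFn {D : ℕ} (g : (Fin D → ℝ) → ℝ) : Prop :=
  ∃ (w : Fin D → ℝ) (r : ℝ), ∀ x, g x = (∑ d, w d * x d) + r

/-- The fan-shaped function on `ℝ^D` built from the (0-indexed) affine functions
`h 0, …, h (D-1)` and positive factors `μ 0, …, μ (D-2)` via `F 0 = h 0` and
`F (j+1) x = σ(F j x - μ j * σ(h (j+1) x))` where `σ(u) = max u 0` is ReLU;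
the fan-shaped function itself is `fan h μ (D - 1)`. -/
noncomputable def fan {D : ℕ} (h : ℕ → (Fin D → ℝ) → ℝ) (μ : ℕ → ℝ) :
    ℕ → (Fin D → ℝ) → ℝ
  | 0 => h 0
  | j + 1 => fun x => max (fan h μ j x - μ j * max (h (j + 1) x) 0) 0

/-- The generalized De Morgan duality: a disjoint rule system over `D`-simplices,
i.e., the indicator of the union of pairwise disjoint simplices contained in
`[-B, B]^D`, is represented, up to arbitrarily small Lebesgue measure, by an
affine function plus finitely many fan-shaped ReLU terms. -/
private lemma relu_relu (a b : ℝ) (hb : 0 ≤ b) : max (max a 0 - b) 0 = max (a - b) 0 := by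
  rcases le_total a 0 with h | h
  · rw [max_eq_right h, zero_sub, max_eq_right (by linarith), max_eq_right (by linarith)]
  · rw [max_eq_left h]

private lemma fan_eq {D : ℕ} (h : ℕ → (Fin D → ℝ) → ℝ) (μ : ℕ → ℝ) (hμ : ∀ j, 0 ≤ μ j) :
    ∀ (m : ℕ) (x), fan h μ (m + 1) x =
      max (h 0 x - ∑ j ∈ Finset.range (m + 1), μ j * max (h (j + 1) x) 0) 0
  | 0, x => by
    show max (h 0 x - μ 0 * max (h 1 x) 0) 0 = _
    rw [Finset.sum_range_one]
  | (m+1), x => by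
    show max (fan h μ (m + 1) x - μ (m+1) * max (h (m + 2) x) 0) 0 = _
    rw [fan_eq h μ hμ m x, Finset.sum_range_succ,
      relu_relu _ _ (mul_nonneg (hμ (m+1)) (le_max_right _ _)), sub_sub,
      ← Finset.sum_range_succ, ← Finset.sum_range_succ]

private lemma isAffineFn_affineMap {D : ℕ} (f : (Fin D → ℝ) →ᵃ[ℝ] ℝ) : IsAffineFn (⇑f) := by
  classical
  refine ⟨fun d => f.linear (fun j => if d = j then 1 else 0), f 0, fun x => ?_⟩
  have h1 : f x = f.linear x + f 0 := by
    conv_lhs => rw [AffineMap.decomp f]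
    rfl
  rw [h1, LinearMap.pi_apply_eq_sum_univ f.linear x]
  congr 1
  exact Finset.sum_congr rfl fun d _ => by rw [smul_eq_mul, mul_comm]

private lemma IsAffineFn.congr {D : ℕ} {f g : (Fin D → ℝ) → ℝ} (hf : IsAffineFn f)
    (h : ∀ x, g x = f x) : IsAffineFn g := by
  obtain ⟨w, r, hw⟩ := hf
  exact ⟨w, r, fun x => (h x).trans (hw x)⟩

private lemma IsAffineFn.comb {D : ℕ} {f : (Fin D → ℝ) → ℝ} (hf : IsAffineFn f) (a c : ℝ) :
    IsAffineFn (fun x => a * f x + c) := by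
  obtain ⟨w, r, hw⟩ := hf
  refine ⟨fun d => a * w d, a * r + c, fun x => ?_⟩
  show a * f x + c = _
  rw [hw x, mul_add, Finset.mul_sum, add_assoc]
  exact congrArg₂ (· + ·) (Finset.sum_congr rfl fun d _ => (mul_assoc a (w d) (x d)).symm) rfl

private lemma isAffineFn_const {D : ℕ} (c : ℝ) : IsAffineFn (fun _ : Fin D → ℝ => c) :=
  ⟨0, c, fun x => by simp⟩

private lemma IsAffineFn.bound {D : ℕ} {f : (Fin D → ℝ) → ℝ} (hf : IsAffineFn f) (B : ℝ)
    (hB : 0 ≤ B) : ∃ C, 0 ≤ C ∧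
      ∀ x ∈ Set.Icc (fun _ => -B) (fun _ => (B : ℝ)), |f x| ≤ C := by
  obtain ⟨w, r, hw⟩ := hf
  refine ⟨(∑ d, |w d| * B) + |r|, by positivity, fun x hx => ?_⟩
  obtain ⟨hx1, hx2⟩ := hx
  rw [hw x]
  refine le_trans (abs_add_le _ _) (add_le_add ?_ le_rfl)
  refine le_trans (Finset.abs_sum_le_sum_abs _ _) (Finset.sum_le_sum fun d _ => ?_)
  rw [abs_mul]
  exact mul_le_mul_of_nonneg_left (abs_le.2 ⟨hx1 d, hx2 d⟩) (abs_nonneg _)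

private lemma affine_zero_null {D : ℕ} (f : (Fin D → ℝ) →ᵃ[ℝ] ℝ) (x₀ : Fin D → ℝ)
    (hx₀ : f x₀ ≠ 0) : volume {x | f x = 0} = 0 := by
  have hset : {x | f x = 0} =
      (AffineSubspace.comap f (AffineSubspace.mk' (0 : ℝ) ⊥) : Set (Fin D → ℝ)) := by
    ext x
    simp only [Set.mem_setOf_eq, AffineSubspace.coe_comap, Set.mem_preimage, SetLike.mem_coe,
      AffineSubspace.mem_mk', Submodule.mem_bot, vsub_eq_sub, sub_zero]
  rw [hset]
  refine Measure.addHaar_affineSubspace volume _ fun h => hx₀ ?_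
  have : x₀ ∈ AffineSubspace.comap f (AffineSubspace.mk' (0 : ℝ) ⊥) := h ▸ trivial
  simpa [AffineSubspace.mem_comap, AffineSubspace.mem_mk'] using this

private lemma slab_tendsto {D : ℕ} (B : ℝ) (f : (Fin D → ℝ) →ᵃ[ℝ] ℝ) (x₀ : Fin D → ℝ)
    (hx₀ : f x₀ ≠ 0) :
    Filter.Tendsto (fun m : ℕ => volume (Set.Icc (fun _ => -B) (fun _ => (B : ℝ)) ∩
      {x | |f x| ≤ 1 / (m + 1)})) Filter.atTop (nhds 0) := by
  set cube : Set (Fin D → ℝ) := Set.Icc (fun _ => -B) (fun _ => (B : ℝ)) with hcube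
  set s : ℕ → Set (Fin D → ℝ) := fun m => cube ∩ {x | |f x| ≤ 1 / (m + 1)} with hs
  have hclosed : ∀ m, IsClosed (s m) := by
    intro m
    refine IsClosed.inter isClosed_Icc ?_
    have : {x : Fin D → ℝ | |f x| ≤ 1 / (m + 1)}
        = f ⁻¹' (Set.Icc (-(1 / (m + 1))) (1 / (m + 1))) := by
      ext x; simp [abs_le]
    rw [this]
    exact IsClosed.preimage f.continuous_of_finiteDimensional isClosed_Icc
  have hanti : Antitone s := by
    intro m m' hmm'
    refine Set.inter_subset_inter_right _ fun x hx => ?_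
    simp only [Set.mem_setOf_eq] at hx ⊢
    refine le_trans hx ?_
    have hcast : ((m : ℝ) + 1) ≤ (m' : ℝ) + 1 := by
      have := (Nat.cast_le (α := ℝ)).2 hmm'
      linarith
    exact one_div_le_one_div_of_le (by positivity) hcast
  have hfin : ∃ m : ℕ, volume (s m) ≠ ⊤ := by
    refine ⟨0, ?_⟩
    refine ne_of_lt (lt_of_le_of_lt (measure_mono Set.inter_subset_left) ?_)
    rw [hcube, Real.volume_Icc_pi]
    exact ENNReal.prod_lt_top fun _ _ => ENNReal.ofReal_lt_top
  have hiInter : (⋂ m, s m) ⊆ {x | f x = 0} := by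
    intro x hx
    simp only [Set.mem_iInter, hs, Set.mem_inter_iff, Set.mem_setOf_eq] at hx
    by_contra hfx
    obtain ⟨m, hm⟩ := exists_nat_one_div_lt (abs_pos.2 hfx)
    exact absurd ((hx m).2) (not_le.2 hm)
  have h0 : volume (⋂ m, s m) = 0 :=
    le_antisymm (le_trans (measure_mono hiInter) (le_of_eq (affine_zero_null f x₀ hx₀)))
      zero_le
  have := tendsto_measure_iInter_atTop (fun m => (hclosed m).measurableSet.nullMeasurableSet)
    hanti hfin
  rw [h0] at this
  exact this

private lemma prod_one_sub {m : ℕ} (β : Fin m → ℝ) :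
    ∏ k, (1 - β k) = ∑ T : Finset (Fin m), (-1 : ℝ) ^ T.card * ∏ k ∈ T, β k := by
  classical
  have h := Finset.prod_add (fun k => (-1 : ℝ) * β k) (fun _ => (1 : ℝ)) Finset.univ
  simp only [Finset.prod_const_one, mul_one] at h
  calc ∏ k, (1 - β k) = ∏ k, ((-1 : ℝ) * β k + 1) := by
        refine Finset.prod_congr rfl fun k _ => by ring
    _ = ∑ T ∈ Finset.univ.powerset, ∏ k ∈ T, ((-1 : ℝ) * β k) := h
    _ = ∑ T : Finset (Fin m), (-1 : ℝ) ^ T.card * ∏ k ∈ T, β k := by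
        rw [Finset.powerset_univ]
        refine Finset.sum_congr rfl fun T _ => ?_
        rw [Finset.prod_mul_distrib, Finset.prod_const]

private lemma sum_if_split {n : ℕ} (u : Finset (Fin (n+1)) → ℝ) :
    ∑ T : Finset (Fin (n+1)), (if T = ∅ ∨ T = Finset.univ then 0 else u T) =
      (∑ T : Finset (Fin (n+1)), u T) - u ∅ - u Finset.univ := by
  classical
  have hne : (∅ : Finset (Fin (n+1))) ≠ Finset.univ := by
    simp [Finset.eq_univ_iff_forall]
  have key : ∀ T : Finset (Fin (n+1)), (if T = ∅ ∨ T = Finset.univ then 0 else u T)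
      = u T - ((if T = ∅ then u T else 0) + (if T = Finset.univ then u T else 0)) := by
    intro T
    by_cases h1 : T = ∅
    · subst h1; simp [hne]
    · by_cases h2 : T = Finset.univ
      · subst h2; simp [Ne.symm hne]
      · simp [h1, h2]
  rw [Finset.sum_congr rfl fun T _ => key T, Finset.sum_sub_distrib, Finset.sum_add_distrib,
    Finset.sum_ite_eq' Finset.univ (∅ : Finset (Fin (n+1))) u,
    Finset.sum_ite_eq' Finset.univ (Finset.univ : Finset (Fin (n+1))) u]
  simp [sub_sub]

theorem generalized_de_morgan_duality (D : ℕ) (hD : 2 ≤ D) (B : ℝ) (hB : 0 < B)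
    (n : ℕ) (v : Fin n → Fin (D + 1) → (Fin D → ℝ))
    (hv : ∀ i, AffineIndependent ℝ (v i))
    (S : Fin n → Set (Fin D → ℝ))
    (hS : ∀ i, S i = convexHull ℝ (Set.range (v i)))
    (hSB : ∀ i, S i ⊆ Set.Icc (fun _ => -B) (fun _ => (B : ℝ)))
    (hdisj : ∀ i j, i ≠ j → S i ∩ S j = ∅) :
    ∀ δ > (0 : ℝ),
      ∃ (N : ℕ) (g₀ : (Fin D → ℝ) → ℝ)
        (hw : Fin N → ℕ → (Fin D → ℝ) → ℝ) (μ : Fin N → ℕ → ℝ) (c : Fin N → ℝ),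
        IsAffineFn g₀ ∧
        (∀ j, ∀ i < D, IsAffineFn (hw j i)) ∧ (∀ j, ∀ i < D - 1, 0 < μ j i) ∧
        volume {x : Fin D → ℝ | x ∈ Set.Icc (fun _ => -B) (fun _ => (B : ℝ)) ∧
            g₀ x + ∑ j, c j * fan (hw j) (μ j) (D - 1) x ≠
              Set.indicator (⋃ i, S i) (fun _ => (1 : ℝ)) x} <
          ENNReal.ofReal δ := by
  intro δ hδ
  classical
  set cube : Set (Fin D → ℝ) := Set.Icc (fun _ => -B) (fun _ => (B : ℝ)) with hcube
  -- the barycentric coordinates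
  have htop : ∀ i, affineSpan ℝ (Set.range (v i)) = ⊤ := by
    intro i
    rw [(hv i).affineSpan_eq_top_iff_card_eq_finrank_add_one]
    simp [Module.finrank_fin_fun]
  let b : Fin n → AffineBasis (Fin (D + 1)) ℝ (Fin D → ℝ) := fun i => ⟨v i, hv i, htop i⟩
  let lam : Fin n → Fin (D + 1) → (Fin D → ℝ) → ℝ := fun i k x => (b i).coord k x
  have hlam_aff : ∀ i k, IsAffineFn (lam i k) := fun i k => isAffineFn_affineMap ((b i).coord k)
  have hlam1 : ∀ i k, lam i k (v i k) = 1 := by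
    intro i k
    show (b i).coord k ((b i) k) = 1
    simp [AffineBasis.coord_apply]
  have hsum1 : ∀ i x, ∑ k, lam i k x = 1 := fun i x => (b i).sum_coord_apply_eq_one x
  have hSi : ∀ i, S i = {x | ∀ k, 0 ≤ lam i k x} := by
    intro i
    rw [hS i]
    exact (b i).convexHull_eq_nonneg_coord
  -- bounds on the coordinates over the cube
  choose Cf hCf0 hCfB using fun p : Fin n × Fin (D + 1) => (hlam_aff p.1 p.2).bound B hB.le
  set C : ℝ := 1 + ∑ p : Fin n × Fin (D + 1), Cf p with hCdef
  have hC1 : 1 ≤ C := by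
    rw [hCdef]
    have : 0 ≤ ∑ p : Fin n × Fin (D + 1), Cf p :=
      Finset.sum_nonneg fun p _ => hCf0 p
    linarith
  have hCp : ∀ p : Fin n × Fin (D + 1), Cf p ≤ C - 1 := by
    intro p
    rw [hCdef]
    have := Finset.single_le_sum (f := Cf) (fun q _ => hCf0 q) (Finset.mem_univ p)
    linarith
  -- choose the slab width η
  set K : ℕ := n * (D + 1) with hKdef
  set δ' : ℝ := δ / (K + 1) with hδ'def
  have hδ'0 : 0 < δ' := by positivity
  have hev : ∀ᶠ m : ℕ in Filter.atTop, ∀ p : Fin n × Fin (D + 1),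
      volume (cube ∩ {x | |lam p.1 p.2 x| ≤ 1 / (m + 1)}) < ENNReal.ofReal δ' := by
    rw [Filter.eventually_all]
    intro p
    have h1 : ((b p.1).coord p.2) (v p.1 p.2) ≠ 0 := by
      rw [show ((b p.1).coord p.2) (v p.1 p.2) = lam p.1 p.2 (v p.1 p.2) from rfl, hlam1]
      norm_num
    exact (slab_tendsto B ((b p.1).coord p.2) (v p.1 p.2) h1).eventually_lt_const
      (ENNReal.ofReal_pos.2 hδ'0)
  obtain ⟨m, hm⟩ := hev.exists
  set η : ℝ := 1 / (m + 1) with hηdef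
  have hη0 : 0 < η := by positivity
  have hη1 : η ≤ 1 := by
    rw [hηdef]
    rw [div_le_one (by positivity)]
    have : (0:ℝ) ≤ (m:ℝ) := Nat.cast_nonneg m
    linarith
  set M : ℝ := (C + 1) / η with hMdef
  have hM0 : 0 < M := by
    have : (0:ℝ) < C + 1 := by linarith
    positivity
  have hMη : M * η = C + 1 := div_mul_cancel₀ _ (ne_of_gt hη0)
  -- the index type and the construction data
  set t0 : Finset (Fin (D + 1)) → Fin (D + 1) :=
    (fun T => if hT : T.Nonempty then T.min' hT else ⟨0, by omega⟩) with ht0def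
  set L : Finset (Fin (D + 1)) → List (Fin (D + 1)) := (fun T => (T.erase (t0 T)).toList)
    with hLdef
  set Hf : (Fin n × Finset (Fin (D + 1)) × Fin 2) → ℕ → (Fin D → ℝ) → ℝ := (fun p j =>
    match j with
    | 0 => fun x => -(lam p.1 (t0 p.2.1) x) - (if p.2.2 = 1 then η else 0)
    | (j+1) => if hj : j < (L p.2.1).length
        then (lam p.1 ((L p.2.1).get ⟨j, hj⟩)) else (fun _ => (-1 : ℝ))) with hHfdef
  set μI : (Fin n × Finset (Fin (D + 1)) × Fin 2) → ℕ → ℝ :=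
    (fun p j => if j < (L p.2.1).length then M else 1) with hμIdef
  set cI : (Fin n × Finset (Fin (D + 1)) × Fin 2) → ℝ := (fun p =>
    if p.2.1 = ∅ ∨ p.2.1 = Finset.univ then 0
    else (-1 : ℝ) ^ (p.2.1.card) * (if p.2.2 = 0 then η⁻¹ else -η⁻¹)) with hcIdef
  set N : ℕ := Fintype.card (Fin n × Finset (Fin (D + 1)) × Fin 2) with hNdef
  set e : Fin N ≃ (Fin n × Finset (Fin (D + 1)) × Fin 2) :=
    (Fintype.equivFin (Fin n × Finset (Fin (D + 1)) × Fin 2)).symm with hedef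
  have hμpos : ∀ p j, 0 < μI p j := by
    intro p j
    rw [hμIdef]
    dsimp only
    split
    · exact hM0
    · norm_num
  -- basic facts about the list L
  have ht0mem : ∀ (T : Finset (Fin (D + 1))), T.Nonempty → t0 T ∈ T := by
    intro T hT
    rw [ht0def]
    dsimp only
    rw [dif_pos hT]
    exact T.min'_mem hT
  have hLlen : ∀ T : Finset (Fin (D + 1)), T ≠ Finset.univ → (L T).length ≤ D - 1 := by
    intro T hT
    have hlen : (L T).length = (T.erase (t0 T)).card := Finset.length_toList _
    have h1 : T.card < D + 1 := by
      have := (Finset.card_lt_iff_ne_univ T).2 hT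
      simpa using this
    rcases T.eq_empty_or_nonempty with rfl | hTne
    · rw [Finset.erase_empty, Finset.card_empty] at hlen
      omega
    · rw [Finset.card_erase_of_mem (ht0mem T hTne)] at hlen
      omega
  have hLmem : ∀ (T : Finset (Fin (D + 1))) (j : ℕ) (hj : j < (L T).length),
      (L T).get ⟨j, hj⟩ ∈ T.erase (t0 T) := by
    intro T j hj
    exact Finset.mem_toList.1 (List.get_mem (L T) ⟨j, hj⟩)
  have hLsurj : ∀ (T : Finset (Fin (D + 1))) (k : Fin (D + 1)), k ∈ T.erase (t0 T) →
      ∃ (j : ℕ) (hj : j < (L T).length), (L T).get ⟨j, hj⟩ = k := by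
    intro T k hk
    have : k ∈ (L T) := Finset.mem_toList.2 hk
    obtain ⟨j, hj⟩ := List.mem_iff_get.1 this
    exact ⟨j.1, j.2, by simpa using hj⟩
  -- the main pointwise identity
  have key : ∀ x ∈ cube, (∀ i k, η < |lam i k x|) →
      ((n : ℝ) + ∑ j : Fin N, cI (e j) * fan (Hf (e j)) (μI (e j)) (D - 1) x
        = Set.indicator (⋃ i, S i) (fun _ => (1 : ℝ)) x) := by
    intro x hxcube hxoff
    obtain ⟨D', hD'⟩ : ∃ D', D - 1 = D' + 1 := ⟨D - 2, by omega⟩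
    rw [hD']
    set β : Fin n → Fin (D + 1) → ℝ := (fun i k => if lam i k x < 0 then 1 else 0) with hβdef
    -- evaluation of each pair of fan terms
    have hper : ∀ (i : Fin n) (T : Finset (Fin (D + 1))),
        (∑ t : Fin 2, cI (i, T, t) * fan (Hf (i, T, t)) (μI (i, T, t)) (D' + 1) x)
          = (if T = ∅ ∨ T = Finset.univ then 0
              else (-1 : ℝ) ^ T.card * ∏ k ∈ T, β i k) := by
      intro i T
      by_cases hTtriv : T = ∅ ∨ T = Finset.univ
      · rw [if_pos hTtriv]
        have hc : ∀ t : Fin 2, cI (i, T, t) = 0 := by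
          intro t
          show (if T = ∅ ∨ T = Finset.univ then (0:ℝ)
            else (-1 : ℝ) ^ T.card * (if t = 0 then η⁻¹ else -η⁻¹)) = 0
          rw [if_pos hTtriv]
        rw [Fin.sum_univ_two, hc 0, hc 1]
        ring
      · rw [if_neg hTtriv]
        push_neg at hTtriv
        obtain ⟨hTne', hTu⟩ := hTtriv
        have hTne : T.Nonempty := hTne'
        have ht0T : t0 T ∈ T := ht0mem T hTne
        have hlen : (L T).length ≤ D' + 1 := by
          have := hLlen T hTu
          omega
        have hcv : ∀ t : Fin 2, cI (i, T, t)
            = (-1 : ℝ) ^ T.card * (if t = 0 then η⁻¹ else -η⁻¹) := by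
          intro t
          show (if T = ∅ ∨ T = Finset.univ then (0:ℝ)
            else (-1 : ℝ) ^ T.card * (if t = 0 then η⁻¹ else -η⁻¹)) = _
          rw [if_neg (by push_neg; exact ⟨hTne', hTu⟩)]
        set Sm : ℝ := ∑ jj ∈ Finset.range (D' + 1),
            μI (i, T, 0) jj * max (Hf (i, T, 0) (jj + 1) x) 0 with hSmdef
        have hSm_nonneg : 0 ≤ Sm :=
          Finset.sum_nonneg fun jj _ => mul_nonneg (hμpos _ jj).le (le_max_right _ _)
        have hfan' : ∀ t : Fin 2, fan (Hf (i, T, t)) (μI (i, T, t)) (D' + 1) x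
            = max (-(lam i (t0 T) x) - (if t = 1 then η else 0) - Sm) 0 := by
          intro t
          rw [fan_eq _ _ (fun j => (hμpos (i, T, t) j).le) D' x]
        by_cases hA : ∀ k ∈ T, lam i k x < -η
        · have hSm0 : Sm = 0 := by
            rw [hSmdef]
            apply Finset.sum_eq_zero
            intro jj _
            rcases lt_or_ge jj (L T).length with hjj | hjj
            · have hmem := hLmem T jj hjj
              have hHv : Hf (i, T, 0) (jj + 1) x = lam i ((L T).get ⟨jj, hjj⟩) x := by
                show (if hj : jj < (L T).length
                  then lam i ((L T).get ⟨jj, hj⟩) else fun _ => (-1 : ℝ)) x = _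
                rw [dif_pos hjj]
              rw [hHv]
              have hneg : lam i ((L T).get ⟨jj, hjj⟩) x < 0 := by
                have := hA _ (Finset.mem_of_mem_erase hmem)
                linarith
              rw [max_eq_right hneg.le, mul_zero]
            · have hHv : Hf (i, T, 0) (jj + 1) x = -1 := by
                show (if hj : jj < (L T).length
                  then lam i ((L T).get ⟨jj, hj⟩) else fun _ => (-1 : ℝ)) x = _
                rw [dif_neg (not_lt.2 hjj)]
              rw [hHv, max_eq_right (by norm_num : (-1 : ℝ) ≤ 0), mul_zero]
          have ha : η < -(lam i (t0 T) x) := by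
            have := hA _ ht0T
            linarith
          have hv0 : fan (Hf (i, T, 0)) (μI (i, T, 0)) (D' + 1) x = -(lam i (t0 T) x) := by
            rw [hfan' 0, hSm0]
            have h00 : (if (0 : Fin 2) = 1 then η else 0) = 0 := rfl
            rw [h00]
            rw [max_eq_left (by linarith)]
            ring
          have hv1 : fan (Hf (i, T, 1)) (μI (i, T, 1)) (D' + 1) x = -(lam i (t0 T) x) - η := by
            rw [hfan' 1, hSm0]
            have h11 : (if (1 : Fin 2) = 1 then η else 0) = η := rfl
            rw [h11]
            rw [max_eq_left (by linarith)]
            ring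
          have hprod1 : (∏ k ∈ T, β i k) = 1 := by
            apply Finset.prod_eq_one
            intro k hk
            show (if lam i k x < 0 then (1:ℝ) else 0) = 1
            rw [if_pos (by have := hA k hk; linarith)]
          rw [Fin.sum_univ_two, hv0, hv1, hcv 0, hcv 1, hprod1]
          have hii0 : (if (0 : Fin 2) = 0 then η⁻¹ else -η⁻¹) = η⁻¹ := rfl
          have hii1 : (if (1 : Fin 2) = 0 then η⁻¹ else -η⁻¹) = -η⁻¹ := rfl
          rw [hii0, hii1]
          field_simp
          ring
        · push_neg at hA
          obtain ⟨k, hkT, hk⟩ := hA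
          have hkpos : η < lam i k x := by
            rcases lt_abs.1 (hxoff i k) with h | h
            · exact h
            · linarith
          have hprod0 : (∏ k ∈ T, β i k) = 0 := by
            apply Finset.prod_eq_zero hkT
            show (if lam i k x < 0 then (1:ℝ) else 0) = 0
            rw [if_neg (by linarith)]
          have hzero : ∀ t : Fin 2,
              -(lam i (t0 T) x) - (if t = 1 then η else 0) - Sm ≤ 0 := by
            intro t
            have hshift : (0:ℝ) ≤ (if t = 1 then η else 0) := by
              split
              · exact hη0.le
              · exact le_refl 0
            by_cases hk0 : k = t0 T
            · rw [← hk0]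
              linarith
            · have hkE : k ∈ T.erase (t0 T) := Finset.mem_erase.2 ⟨hk0, hkT⟩
              obtain ⟨j, hj, hget⟩ := hLsurj T k hkE
              have hterm : M * η ≤ μI (i, T, 0) j * max (Hf (i, T, 0) (j + 1) x) 0 := by
                have hμv : μI (i, T, 0) j = M := by
                  show (if j < (L T).length then M else 1) = M
                  rw [if_pos hj]
                have hHv : Hf (i, T, 0) (j + 1) x = lam i k x := by
                  show (if hj' : j < (L T).length
                    then lam i ((L T).get ⟨j, hj'⟩) else fun _ => (-1 : ℝ)) x = _
                  rw [dif_pos hj, hget]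
                rw [hμv, hHv]
                have : η ≤ max (lam i k x) 0 := le_trans hkpos.le (le_max_left _ _)
                exact mul_le_mul_of_nonneg_left this hM0.le
              have hSmbig : M * η ≤ Sm := by
                rw [hSmdef]
                refine le_trans hterm (Finset.single_le_sum
                  (f := fun jj => μI (i, T, 0) jj * max (Hf (i, T, 0) (jj + 1) x) 0)
                  (fun jj _ => mul_nonneg (hμpos _ jj).le (le_max_right _ _)) ?_)
                exact Finset.mem_range.2 (by omega)
              have hbnd : -(lam i (t0 T) x) ≤ C - 1 := by
                have h1 := hCfB (i, t0 T) x hxcube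
                have h2 := hCp (i, t0 T)
                have := neg_le_abs (lam i (t0 T) x)
                dsimp at h1
                linarith [neg_abs_le (lam i (t0 T) x)]
              rw [hMη] at hSmbig
              linarith
          have hz0 : fan (Hf (i, T, 0)) (μI (i, T, 0)) (D' + 1) x = 0 := by
            rw [hfan' 0, max_eq_right (hzero 0)]
          have hz1 : fan (Hf (i, T, 1)) (μI (i, T, 1)) (D' + 1) x = 0 := by
            rw [hfan' 1, max_eq_right (hzero 1)]
          rw [Fin.sum_univ_two, hz0, hz1, hprod0]
          ring
    -- the product formula for membership in a simplex
    have hprodS : ∀ i, (∏ k, (1 - β i k)) = (if x ∈ S i then (1 : ℝ) else 0) := by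
      intro i
      by_cases hxS : x ∈ S i
      · rw [if_pos hxS]
        apply Finset.prod_eq_one
        intro k _
        have h0 : 0 ≤ lam i k x := by
          rw [hSi i] at hxS
          exact hxS k
        show 1 - (if lam i k x < 0 then (1:ℝ) else 0) = 1
        rw [if_neg (not_lt.2 h0), sub_zero]
      · rw [if_neg hxS]
        rw [hSi i] at hxS
        simp only [Set.mem_setOf_eq, not_forall, not_le] at hxS
        obtain ⟨k, hk⟩ := hxS
        apply Finset.prod_eq_zero (Finset.mem_univ k)
        show 1 - (if lam i k x < 0 then (1:ℝ) else 0) = 0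
        rw [if_pos hk, sub_self]
    -- indicator of the union as a sum
    have hind : Set.indicator (⋃ i, S i) (fun _ => (1 : ℝ)) x
        = ∑ i, (if x ∈ S i then (1 : ℝ) else 0) := by
      by_cases hx : x ∈ ⋃ i, S i
      · rw [Set.indicator_of_mem hx]
        obtain ⟨i₀, hi₀⟩ := Set.mem_iUnion.1 hx
        symm
        rw [Finset.sum_eq_single_of_mem i₀ (Finset.mem_univ i₀)]
        · rw [if_pos hi₀]
        · intro j _ hji
          rw [if_neg]
          intro hxj
          have hempty := hdisj j i₀ hji
          exact absurd (Set.mem_inter hxj hi₀)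
            (by rw [hempty]; exact Set.notMem_empty x)
      · rw [Set.indicator_of_notMem hx]
        symm
        apply Finset.sum_eq_zero
        intro i _
        rw [if_neg (fun hxi => hx (Set.mem_iUnion.2 ⟨i, hxi⟩))]
    -- putting everything together
    rw [hind]
    rw [Fintype.sum_equiv e
      (fun j : Fin N => cI (e j) * fan (Hf (e j)) (μI (e j)) (D' + 1) x)
      (fun p => cI p * fan (Hf p) (μI p) (D' + 1) x) (fun j => rfl)]
    rw [Fintype.sum_prod_type]
    have hinner : ∀ i : Fin n,
        (∑ q : Finset (Fin (D + 1)) × Fin 2,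
          cI (i, q.1, q.2) * fan (Hf (i, q.1, q.2)) (μI (i, q.1, q.2)) (D' + 1) x)
        = (if x ∈ S i then (1 : ℝ) else 0) - 1 := by
      intro i
      rw [Fintype.sum_prod_type]
      rw [Finset.sum_congr rfl (fun T _ => hper i T)]
      rw [sum_if_split (fun T : Finset (Fin (D + 1)) => (-1 : ℝ) ^ T.card * ∏ k ∈ T, β i k)]
      rw [← prod_one_sub (β i), hprodS i]
      have hEmpty : (-1 : ℝ) ^ (∅ : Finset (Fin (D + 1))).card
          * ∏ k ∈ (∅ : Finset (Fin (D + 1))), β i k = 1 := by simp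
      have hUniv : (-1 : ℝ) ^ (Finset.univ : Finset (Fin (D + 1))).card
          * ∏ k ∈ (Finset.univ : Finset (Fin (D + 1))), β i k = 0 := by
        have hexk : ∃ k, ¬ lam i k x < 0 := by
          by_contra hall
          push_neg at hall
          have : (∑ k, lam i k x) ≤ 0 :=
            Finset.sum_nonpos fun k _ => (hall k).le
          rw [hsum1 i x] at this
          linarith
        obtain ⟨k, hk⟩ := hexk
        have : (∏ k ∈ (Finset.univ : Finset (Fin (D + 1))), β i k) = 0 := by
          apply Finset.prod_eq_zero (Finset.mem_univ k)
          show (if lam i k x < 0 then (1:ℝ) else 0) = 0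
          rw [if_neg hk]
        rw [this, mul_zero]
      rw [hEmpty, hUniv]
      ring
    rw [Finset.sum_congr rfl (fun i _ => hinner i), Finset.sum_sub_distrib,
      Finset.sum_const, Finset.card_univ, Fintype.card_fin, nsmul_eq_mul, mul_one]
    ring
  refine ⟨N, fun _ => (n : ℝ), fun j => Hf (e j), fun j => μI (e j), fun j => cI (e j),
    isAffineFn_const _, ?_, fun j i _ => hμpos (e j) i, ?_⟩
  · -- affineness
    intro j i _
    rw [hHfdef]
    match i with
    | 0 =>
      exact ((hlam_aff (e j).1 (t0 (e j).2.1)).comb (-1)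
        (-(if (e j).2.2 = 1 then η else 0))).congr (fun x => by dsimp only; ring)
    | (i+1) =>
      dsimp only
      split
      · exact hlam_aff _ _
      · exact isAffineFn_const _
  · -- the measure estimate
    have hsub : {x : Fin D → ℝ | x ∈ cube ∧
        (n : ℝ) + ∑ j : Fin N, cI (e j) * fan (Hf (e j)) (μI (e j)) (D - 1) x ≠
          Set.indicator (⋃ i, S i) (fun _ => (1 : ℝ)) x} ⊆
        ⋃ p : Fin n × Fin (D + 1), (cube ∩ {x | |lam p.1 p.2 x| ≤ η}) := by
      intro x hx
      obtain ⟨hx1, hx2⟩ := hx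
      by_contra hxB
      simp only [Set.mem_iUnion, not_exists, Set.mem_inter_iff, Set.mem_setOf_eq, not_and,
        not_le] at hxB
      exact hx2 (key x hx1 (fun i k => (by simpa using hxB (i, k) hx1)))
    calc volume _ ≤ volume (⋃ p : Fin n × Fin (D + 1),
          (cube ∩ {x | |lam p.1 p.2 x| ≤ η})) := measure_mono hsub
      _ ≤ ∑ p : Fin n × Fin (D + 1), volume (cube ∩ {x | |lam p.1 p.2 x| ≤ η}) :=
          le_trans (measure_iUnion_le _) (le_of_eq (tsum_fintype _))
      _ ≤ ∑ q : Fin n × Fin (D + 1), (ENNReal.ofReal δ') :=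
          Finset.sum_le_sum (fun p _ => le_of_lt (hm p))
      _ = (K : ENNReal) * ENNReal.ofReal δ' := by
          rw [Finset.sum_const, Finset.card_univ, Fintype.card_prod, Fintype.card_fin,
            Fintype.card_fin, nsmul_eq_mul, hKdef]
      _ < ENNReal.ofReal δ := by
          rw [← ENNReal.ofReal_natCast K, ← ENNReal.ofReal_mul (Nat.cast_nonneg K),
            ENNReal.ofReal_lt_ofReal_iff hδ, hδ'def]
          have h1 : (K : ℝ) / ((K : ℝ) + 1) < 1 := by
            rw [div_lt_one (by positivity)]
            linarith
          calc (K : ℝ) * (δ / ((K : ℝ) + 1)) = ((K : ℝ) / ((K : ℝ) + 1)) * δ := by ring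
            _ < 1 * δ := mul_lt_mul_of_pos_right h1 hδ
            _ = δ := one_mul δ
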